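/- Let f be prime, q = ax² + bxy + cy² primitive of discriminant D with gcd(a, f) = 1. For 0 ≤ g ≤ f, the form Q_g = q·R_g is primitive if and only if g = f or f ∤ q(g,1). The number of such g equals f - (D/f), where (D/f) is the Kronecker symbol. -/

import Mathlib

/-- An integral binary quadratic form ax² + bxy + cy². -/
structure BQF where
  a : ℤ
  b : ℤ
  c : ℤ

namespace BQF

/-- Value of the form at (x, y). -/
def eval (q : BQF) (x y : ℤ) : ℤ := q.a * x ^ 2 + q.b * x * y + q.c * y ^ 2

/-- Discriminant b² - 4ac. -/
def disc (q : BQF) : ℤ := q.b ^ 2 - 4 * q.a * q.c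

/-- A form is primitive if gcd(a, b, c) = 1. -/
def IsPrimitive (q : BQF) : Prop := Int.gcd (Int.gcd q.a q.b) q.c = 1

/-- Right action: (q·M)(x,y) = q(px + ry, sx + ty) for M = [[p,r],[s,t]]. -/
def act (q : BQF) (M : Matrix (Fin 2) (Fin 2) ℤ) : BQF :=
  ⟨q.eval (M 0 0) (M 1 0),
   q.eval (M 0 0 + M 0 1) (M 1 0 + M 1 1) - q.eval (M 0 0) (M 1 0) - q.eval (M 0 1) (M 1 1),
   q.eval (M 0 1) (M 1 1)⟩

/-- Proper equivalence: equivalence under the SL₂(ℤ) action. -/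
def ProperEquiv (q q' : BQF) : Prop :=
  ∃ U : Matrix.SpecialLinearGroup (Fin 2) ℤ, q.act U.1 = q'

end BQF

/-- R_g = [[f,g],[0,1]] for g < f, and R_f = [[1,0],[0,f]] when g = f. -/
def Rmat (f g : ℤ) : Matrix (Fin 2) (Fin 2) ℤ :=
  if g = f then !![1, 0; 0, f] else !![f, g; 0, 1]

/-- The Kronecker symbol (D/f) for f prime. -/
def kronSym (D : ℤ) (f : ℕ) : ℤ :=
  if f = 2 then (if D % 2 = 0 then 0 else if D % 8 = 1 ∨ D % 8 = 7 then 1 else -1)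
  else jacobiSym D f

lemma act_ne (q : BQF) (f g : ℤ) (hg : g ≠ f) :
    q.act (Rmat f g) = ⟨q.a * f ^ 2, f * (2 * q.a * g + q.b), q.eval g 1⟩ := by
  rw [Rmat, if_neg hg]
  simp only [BQF.act, BQF.eval, Matrix.cons_val', Matrix.cons_val_zero, Matrix.cons_val_one,
    Matrix.head_cons, Matrix.head_fin_const, Matrix.empty_val', Matrix.cons_val_fin_one,
    Matrix.of_apply]
  rw [BQF.mk.injEq]
  refine ⟨by ring, by ring, by ring⟩

lemma act_eq (q : BQF) (f : ℤ) :
    q.act (Rmat f f) = ⟨q.a, q.b * f, q.c * f ^ 2⟩ := by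
  rw [Rmat, if_pos rfl]
  simp only [BQF.act, BQF.eval, Matrix.cons_val', Matrix.cons_val_zero, Matrix.cons_val_one,
    Matrix.head_cons, Matrix.head_fin_const, Matrix.empty_val', Matrix.cons_val_fin_one,
    Matrix.of_apply]
  rw [BQF.mk.injEq]
  refine ⟨by ring, by ring, by ring⟩

lemma gcd3_eq_one_iff (x y z : ℤ) :
    Int.gcd (Int.gcd x y) z = 1 ↔
      ∀ p : ℕ, p.Prime → ¬((p : ℤ) ∣ x ∧ (p : ℤ) ∣ y ∧ (p : ℤ) ∣ z) := by
  constructor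
  · intro h p hp ⟨hx, hy, hz⟩
    have h2 : (p : ℤ) ∣ ((Int.gcd (Int.gcd x y) z : ℕ) : ℤ) :=
      Int.dvd_coe_gcd (Int.dvd_coe_gcd hx hy) hz
    rw [h] at h2
    have : p ∣ 1 := by exact_mod_cast h2
    simp [Nat.dvd_one] at this
    exact hp.ne_one this
  · intro h
    by_contra hne
    obtain ⟨p, hp, hpd⟩ := Nat.exists_prime_and_dvd hne
    have h1 : (p : ℤ) ∣ ((Int.gcd (Int.gcd x y) z : ℕ) : ℤ) := Int.natCast_dvd_natCast.mpr hpd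
    have hz : (p : ℤ) ∣ z := h1.trans (Int.gcd_dvd_right _ _)
    have h2 : (p : ℤ) ∣ ((Int.gcd x y : ℕ) : ℤ) := h1.trans (Int.gcd_dvd_left _ _)
    exact h p hp ⟨h2.trans (Int.gcd_dvd_left _ _), h2.trans (Int.gcd_dvd_right _ _), hz⟩

lemma key_ne (f : ℕ) (hf : f.Prime) (q : BQF) (hq : q.IsPrimitive) (g : ℤ)
    (hg : g ≠ (f : ℤ)) :
    ((q.act (Rmat f g)).IsPrimitive ↔ ¬ (f : ℤ) ∣ q.eval g 1) := by
  rw [act_ne q f g hg]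
  unfold BQF.IsPrimitive
  simp only []
  rw [gcd3_eq_one_iff]
  constructor
  · intro h hdvd
    exact h f hf ⟨⟨q.a * f, by ring⟩, ⟨2 * q.a * g + q.b, rfl⟩, hdvd⟩
  · intro hnd p hp ⟨h1, h2, h3⟩
    rcases eq_or_ne p f with rfl | pne
    · exact hnd h3
    · have hpz : Prime (p : ℤ) := Nat.prime_iff_prime_int.mp hp
      have hpf : ¬ (p : ℤ) ∣ (f : ℤ) := by
        intro hd
        exact pne ((Nat.prime_dvd_prime_iff_eq hp hf).mp (Int.natCast_dvd_natCast.mp hd))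
      have hpa : (p : ℤ) ∣ q.a := by
        rcases hpz.dvd_mul.mp h1 with h | h
        · exact h
        · exact absurd (hpz.dvd_of_dvd_pow h) hpf
      have hpb : (p : ℤ) ∣ q.b := by
        have h2' : (p : ℤ) ∣ 2 * q.a * g + q.b := by
          rcases hpz.dvd_mul.mp h2 with h | h
          · exact absurd h hpf
          · exact h
        have h2ag : (p : ℤ) ∣ 2 * q.a * g := (hpa.mul_left 2).mul_right g
        simpa using dvd_sub h2' h2ag
      have hpc : (p : ℤ) ∣ q.c := by
        have : (p : ℤ) ∣ q.a * g ^ 2 + q.b * g * 1 := by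
          exact dvd_add ((hpa.mul_right _)) ((hpb.mul_right _).mul_right _)
        have := dvd_sub h3 this
        simpa [BQF.eval] using this
      exact (gcd3_eq_one_iff q.a q.b q.c).mp hq p hp ⟨hpa, hpb, hpc⟩

lemma key_eq (f : ℕ) (hf : f.Prime) (q : BQF) (hq : q.IsPrimitive)
    (ha : Int.gcd q.a f = 1) : (q.act (Rmat f f)).IsPrimitive := by
  rw [act_eq]
  unfold BQF.IsPrimitive
  rw [gcd3_eq_one_iff]
  intro p hp ⟨h1, h2, h3⟩
  have hpz : Prime (p : ℤ) := Nat.prime_iff_prime_int.mp hp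
  have hpf : ¬ (p : ℤ) ∣ (f : ℤ) := by
    intro hd
    have : (p : ℤ) ∣ ((Int.gcd q.a f : ℕ) : ℤ) := Int.dvd_coe_gcd h1 hd
    rw [ha] at this
    have : p ∣ 1 := by exact_mod_cast this
    exact hp.ne_one (Nat.dvd_one.mp this)
  have hpb : (p : ℤ) ∣ q.b := by
    rcases hpz.dvd_mul.mp h2 with h | h
    · exact h
    · exact absurd h hpf
  have hpc : (p : ℤ) ∣ q.c := by
    rcases hpz.dvd_mul.mp h3 with h | h
    · exact h
    · exact absurd (hpz.dvd_of_dvd_pow h) hpf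
  exact (gcd3_eq_one_iff q.a q.b q.c).mp hq p hp ⟨h1, hpb, hpc⟩

lemma roots_card (f : ℕ) [NeZero f] (hf : f.Prime) (hf2 : f ≠ 2) (a b c D : ℤ)
    (ha : Int.gcd a f = 1) (hd : b ^ 2 - 4 * a * c = D) :
    ((Finset.univ.filter
      (fun x : ZMod f => (a : ZMod f) * x ^ 2 + (b : ZMod f) * x + (c : ZMod f) = 0)).card : ℤ)
      = jacobiSym D f + 1 := by
  haveI : Fact f.Prime := ⟨hf⟩
  set A : ZMod f := (a : ZMod f)
  set B : ZMod f := (b : ZMod f)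
  set C : ZMod f := (c : ZMod f)
  have hD : B ^ 2 - 4 * A * C = (D : ZMod f) := by
    have := congrArg (fun z : ℤ => (z : ZMod f)) hd
    push_cast at this
    exact this
  have hA : IsUnit A := by
    have h1 : IsCoprime a (f : ℤ) := Int.isCoprime_iff_gcd_eq_one.mpr ha
    have h2 : IsCoprime A ((f : ℤ) : ZMod f) := h1.map (Int.castRingHom (ZMod f))
    rw [show (((f : ℤ) : ZMod f)) = 0 by push_cast; exact ZMod.natCast_self f] at h2
    exact isCoprime_zero_right.mp h2
  have h2u : IsUnit (2 : ZMod f) := by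
    have : ((2 : ℕ) : ZMod f) = (2 : ZMod f) := by norm_cast
    rw [← this, ZMod.isUnit_iff_coprime]
    exact (Nat.coprime_primes Nat.prime_two hf).mpr (fun h => hf2 h.symm) |>.symm.symm
  have h2A : IsUnit (2 * A) := h2u.mul hA
  have h4A : IsUnit (4 * A) := by
    have : (4 : ZMod f) * A = (2 * A) * 2 := by ring
    rw [this]; exact h2A.mul h2u
  have equiv : ∀ x : ZMod f, (A * x ^ 2 + B * x + C = 0) ↔ (2 * A * x + B) ^ 2 = (D : ZMod f) := by
    intro x
    constructor
    · intro h
      linear_combination (4 * A) * h + hD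
    · intro h
      have h0 : (4 * A) * (A * x ^ 2 + B * x + C) = 0 := by linear_combination h - hD
      exact (h4A.mul_right_eq_zero).mp h0
  obtain ⟨u, hu⟩ := h2A
  have hmulinv : (2 * A) * (↑u⁻¹ : ZMod f) = 1 := by
    rw [← hu]; exact Units.mul_inv _
  have hcard : (Finset.univ.filter
      (fun x : ZMod f => A * x ^ 2 + B * x + C = 0)).card
      = (Finset.univ.filter (fun y : ZMod f => y ^ 2 = (D : ZMod f))).card := by
    apply Finset.card_bij' (fun x _ => 2 * A * x + B) (fun y _ => ↑u⁻¹ * (y - B))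
    · intro x hx
      simp only [Finset.mem_filter, Finset.mem_univ, true_and] at hx ⊢
      exact (equiv x).mp hx
    · intro y hy
      simp only [Finset.mem_filter, Finset.mem_univ, true_and] at hy ⊢
      rw [equiv]
      have h1 : 2 * A * (↑u⁻¹ * (y - B)) + B = y := by
        linear_combination (y - B) * hmulinv
      rw [h1]; exact hy
    · intro x hx
      linear_combination x * hmulinv
    · intro y hy
      linear_combination (y - B) * hmulinv
  rw [hcard]
  have hchar : ringChar (ZMod f) ≠ 2 := by
    rw [ZMod.ringChar_zmod_n]; exact hf2
  have := quadraticChar_card_sqrts hchar ((D : ℤ) : ZMod f)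
  have hset : ({x : ZMod f | x ^ 2 = (D : ZMod f)}.toFinset)
      = Finset.univ.filter (fun y : ZMod f => y ^ 2 = (D : ZMod f)) := by
    ext x; simp
  rw [hset] at this
  rw [this, ← jacobiSym.legendreSym.to_jacobiSym f D]
  rfl


open scoped Classical in
lemma Ico_card_eq (f : ℕ) [NeZero f] (a b c : ℤ) :
    ((Finset.Ico (0 : ℤ) f).filter (fun g => (f : ℤ) ∣ a * g ^ 2 + b * g + c)).card
      = (Finset.univ.filter
        (fun x : ZMod f => (a : ZMod f) * x ^ 2 + (b : ZMod f) * x + (c : ZMod f) = 0)).card := by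
  have hcast : ∀ g : ℤ, ((f : ℤ) ∣ a * g ^ 2 + b * g + c) ↔
      ((a : ZMod f) * (g : ZMod f) ^ 2 + (b : ZMod f) * (g : ZMod f) + (c : ZMod f) = 0) := by
    intro g
    rw [← ZMod.intCast_zmod_eq_zero_iff_dvd]
    push_cast
    tauto
  have hval : ∀ g : ℤ, 0 ≤ g → g < (f : ℤ) → (((g : ZMod f).val : ℤ)) = g := by
    intro g h0 h1
    have h2 : g = ((g.toNat : ℕ) : ℤ) := (Int.toNat_of_nonneg h0).symm
    have h3 : g.toNat < f := by omega
    rw [h2]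
    push_cast
    rw [ZMod.val_natCast_of_lt h3]
  refine Finset.card_bij' (fun (g : ℤ) _ => (g : ZMod f)) (fun (x : ZMod f) _ => ((x.val : ℤ))) ?_ ?_ ?_ ?_
  · intro g hg
    simp only [Finset.mem_filter, Finset.mem_Ico, Finset.mem_univ, true_and] at hg ⊢
    exact (hcast g).mp hg.2
  · intro x hx
    simp only [Finset.mem_filter, Finset.mem_univ, true_and, Finset.mem_Ico] at hx ⊢
    have hxv : (((x.val : ℤ)) : ZMod f) = x := by
      push_cast
      exact ZMod.natCast_rightInverse x
    refine ⟨⟨Int.natCast_nonneg _, by exact_mod_cast ZMod.val_lt x⟩, ?_⟩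
    rw [hcast, hxv]
    exact hx
  · intro g hg
    simp only [Finset.mem_filter, Finset.mem_Ico] at hg
    exact hval g hg.1.1 hg.1.2
  · intro x hx
    push_cast
    exact ZMod.natCast_rightInverse x

open scoped Classical in
theorem stmt17 (f : ℕ) (hf : f.Prime) (q : BQF) (hq : q.IsPrimitive) (D : ℤ)
    (hd : q.disc = D) (ha : Int.gcd q.a f = 1) :
    (∀ g : ℤ, 0 ≤ g → g ≤ f →
      ((q.act (Rmat f g)).IsPrimitive ↔ (g = f ∨ ¬ (f : ℤ) ∣ q.eval g 1))) ∧
    ((((Finset.Icc (0 : ℤ) f).filter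
        (fun g => (q.act (Rmat f g)).IsPrimitive)).card : ℤ) = f - kronSym D f) := by
  have part1 : ∀ g : ℤ, 0 ≤ g → g ≤ f →
      ((q.act (Rmat f g)).IsPrimitive ↔ (g = f ∨ ¬ (f : ℤ) ∣ q.eval g 1)) := by
    intro g _ _
    by_cases hgf : g = (f : ℤ)
    · subst hgf
      constructor
      · intro _; exact Or.inl rfl
      · intro _; exact key_eq f hf q hq ha
    · rw [key_ne f hf q hq g hgf]
      constructor
      · exact fun h => Or.inr h
      · intro h
        rcases h with h | h
        · exact absurd h hgf
        · exact h
  refine ⟨part1, ?_⟩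
  haveI : NeZero f := ⟨hf.pos.ne'⟩
  have h0f : (0 : ℤ) ≤ (f : ℤ) := Int.natCast_nonneg f
  have hsplit : Finset.Icc (0 : ℤ) (f : ℤ) = insert (f : ℤ) (Finset.Ico 0 (f : ℤ)) :=
    (Finset.Ico_insert_right h0f).symm
  rw [hsplit, Finset.filter_insert, if_pos (key_eq f hf q hq ha)]
  have hnotmem : (f : ℤ) ∉ (Finset.Ico (0 : ℤ) (f : ℤ)).filter
      (fun g => (q.act (Rmat f g)).IsPrimitive) := by
    intro h
    simp only [Finset.mem_filter, Finset.mem_Ico] at h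
    omega
  rw [Finset.card_insert_of_notMem hnotmem]
  -- rewrite the predicate on Ico
  have hfilter : (Finset.Ico (0 : ℤ) (f : ℤ)).filter (fun g => (q.act (Rmat f g)).IsPrimitive)
      = (Finset.Ico (0 : ℤ) (f : ℤ)).filter
          (fun g => ¬ (f : ℤ) ∣ (q.a * g ^ 2 + q.b * g + q.c)) := by
    apply Finset.filter_congr
    intro g hg
    simp only [Finset.mem_Ico] at hg
    rw [key_ne f hf q hq g (by omega)]
    have : q.eval g 1 = q.a * g ^ 2 + q.b * g + q.c := by unfold BQF.eval; ring
    rw [this]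
  rw [hfilter]
  set N := ((Finset.Ico (0 : ℤ) (f : ℤ)).filter
      (fun g => (f : ℤ) ∣ (q.a * g ^ 2 + q.b * g + q.c))).card with hN
  have hsum : ((Finset.Ico (0 : ℤ) (f : ℤ)).filter
      (fun g => ¬ (f : ℤ) ∣ (q.a * g ^ 2 + q.b * g + q.c))).card + N = f := by
    rw [hN, add_comm]
    rw [Finset.card_filter_add_card_filter_not]
    rw [Int.card_Ico]
    omega
  have hdisc : q.b ^ 2 - 4 * q.a * q.c = D := by rw [← hd]; rfl
  have claim : (N : ℤ) = kronSym D f + 1 := by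
    by_cases hf2 : f = 2
    · subst hf2
      -- f = 2 case
      rw [show ((2:ℕ):ℤ) = 2 from by norm_num] at ha hN
      have hodd : ¬ (2 : ℤ) ∣ q.a := by
        intro h2a
        have : (2 : ℤ) ∣ ((Int.gcd q.a 2 : ℕ) : ℤ) := Int.dvd_coe_gcd h2a (by norm_num)
        rw [ha] at this
        norm_num at this
      have hIco : Finset.Ico (0 : ℤ) (2:ℤ) = {0, 1} := by decide
      have hP0 : (q.a * (0:ℤ) ^ 2 + q.b * 0 + q.c) = q.c := by ring
      have hP1 : (q.a * (1:ℤ) ^ 2 + q.b * 1 + q.c) = q.a + q.b + q.c := by ring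
      rw [hN, hIco, Finset.filter_insert, Finset.filter_singleton, hP0, hP1]
      rw [show kronSym D 2 = (if D % 2 = 0 then 0 else
          if D % 8 = 1 ∨ D % 8 = 7 then (1:ℤ) else -1) from if_pos rfl]
      obtain ⟨j, hj⟩ : ∃ j, q.a = 2 * j + 1 := ⟨q.a / 2, by omega⟩
      rcases Int.even_or_odd q.b with hb | hb
      · -- b even: D even, exactly one of c, a+b+c even
        obtain ⟨k, hk⟩ := hb
        have hDe : D = 2 * (2 * k ^ 2 - 2 * q.a * q.c) := by
          rw [← hdisc, hk]; ring
        rw [if_pos (by omega : D % 2 = 0)]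
        by_cases hc : (2 : ℤ) ∣ q.c
        · rw [if_pos hc, if_neg (by omega : ¬ (2:ℤ) ∣ q.a + q.b + q.c)]
          simp
        · rw [if_neg hc, if_pos (by omega : (2:ℤ) ∣ q.a + q.b + q.c)]
          simp
      · -- b odd
        obtain ⟨k, hk⟩ := hb
        obtain ⟨m, hm⟩ : ∃ m, k * (k + 1) = m + m := (Int.even_mul_succ_self k)
        rcases Int.even_or_odd q.c with hc | hc
        · -- c even : D ≡ 1 mod 8, both roots
          obtain ⟨l, hl⟩ := hc
          have hD8 : D = 8 * (m - q.a * l) + 1 := by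
            rw [← hdisc, hk, hl]
            have : k ^ 2 + k = m + m := by linear_combination hm
            linear_combination (4:ℤ) * this
          rw [if_neg (by omega : ¬ D % 2 = 0), if_pos (by omega : D % 8 = 1 ∨ D % 8 = 7)]
          rw [if_pos (by omega : (2:ℤ) ∣ q.c), if_pos (by omega : (2:ℤ) ∣ q.a + q.b + q.c)]
          norm_num
        · -- c odd : D ≡ 5 mod 8, no roots
          obtain ⟨l, hl⟩ := hc
          have hD8 : D = 8 * (m - 2 * j * l - j - l) - 3 := by
            rw [← hdisc, hk, hl, hj]
            have : k ^ 2 + k = m + m := by linear_combination hm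
            linear_combination (4:ℤ) * this
          rw [if_neg (by omega : ¬ D % 2 = 0), if_neg (by omega : ¬ (D % 8 = 1 ∨ D % 8 = 7))]
          rw [if_neg (by omega : ¬ (2:ℤ) ∣ q.c), if_neg (by omega : ¬ (2:ℤ) ∣ q.a + q.b + q.c)]
          simp
    · -- f odd
      rw [hN, Ico_card_eq f q.a q.b q.c, roots_card f hf hf2 q.a q.b q.c D ha hdisc]
      rw [show kronSym D f = jacobiSym D f from if_neg hf2]
  push_cast
  omega
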